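/- Let U and I be nonempty finite sets, Δ : U × I → ℝ with Δ_{ui} ≠ 0 for all (u,i), β ∈ ℝ and γ > 0. Then there exists a constant c ∈ ℝ (depending only on Δ, β, γ, |U|, |I|) such that for every function s : U × I → ℝ, the loss L(s) = Σ_{u∈U} Σ_{i∈I} (Δ_{ui}²/exp(s_{ui}) + β·s_{ui} + γ·s_{ui}²) satisfies L(s) ≥ Σ_{u∈U} KL(p_u || q_u^s) + c, where p_u(i) = Δ_{ui}²/K_u with K_u = Σ_{j∈I} Δ_{uj}², q_u^s(i) = exp(s_{ui})/R_u(s) with R_u(s) = Σ_{j∈I} exp(s_{uj}), and KL(p_u || q_u^s) = Σ_{i∈I} p_u(i)·ln(p_u(i)/q_u^s(i)). -/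
import Mathlib

lemma quad_key (β γ s : ℝ) (hγ : 0 < γ) :
    β * s + γ * s^2 ≥ 2*|s| - (|β|+2)^2/(4*γ) := by
  have h4 : (0:ℝ) < 4*γ := by positivity
  have h1 : -(|β| * |s|) ≤ β*s := by rw [← abs_mul]; exact neg_abs_le _
  rw [ge_iff_le, sub_le_iff_le_add, ← sub_le_iff_le_add', le_div_iff₀ h4,
    ← sq_abs s]
  nlinarith [sq_nonneg (2*γ*|s| - (|β|+2)), h1, abs_nonneg s, abs_nonneg β,
    mul_le_mul_of_nonneg_left h1 h4.le]

lemma per_u {I : Type*} [Fintype I] [Nonempty I] (d : I → ℝ) (hd : ∀ i, d i ≠ 0)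
    (β γ : ℝ) (hγ : 0 < γ) (s : I → ℝ) :
    (∑ i : I, ((d i)^2 / Real.exp (s i) + β * s i + γ * (s i)^2)) ≥
    (∑ i : I, ((d i)^2 / (∑ j : I, (d j)^2)) *
        Real.log (((d i)^2 / (∑ j : I, (d j)^2)) /
          (Real.exp (s i) / (∑ j : I, Real.exp (s j)))))
    + (-(∑ i : I, ((d i)^2 / (∑ j : I, (d j)^2)) *
          Real.log ((d i)^2 / (∑ j : I, (d j)^2)))
       - (Real.log (Fintype.card I) + (Fintype.card I) * ((|β|+2)^2/(4*γ)))) := by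
  set K : ℝ := ∑ j : I, (d j)^2 with hKdef
  have hd2 : ∀ j : I, 0 < (d j)^2 := fun j => by
    have := hd j; positivity
  have hK : 0 < K := Finset.sum_pos (fun j _ => hd2 j) Finset.univ_nonempty
  set R : ℝ := ∑ j : I, Real.exp (s j) with hRdef
  have hR : 0 < R := Finset.sum_pos (fun j _ => Real.exp_pos _) Finset.univ_nonempty
  set T : ℝ := ∑ j : I, |s j| with hTdef
  have hT : 0 ≤ T := Finset.sum_nonneg (fun j _ => abs_nonneg _)
  have hp : ∀ i, 0 < (d i)^2 / K := fun i => div_pos (hd2 i) hK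
  have hpsum : ∑ i : I, (d i)^2 / K = 1 := by
    rw [← Finset.sum_div, div_self hK.ne']
  -- rewrite the KL term
  have hlog : ∀ i : I, Real.log (((d i)^2 / K) / (Real.exp (s i) / R))
      = Real.log ((d i)^2 / K) - s i + Real.log R := by
    intro i
    rw [Real.log_div (hp i).ne' (by positivity), Real.log_div (Real.exp_pos _).ne' hR.ne',
      Real.log_exp]
    ring
  have hKL : (∑ i : I, ((d i)^2 / K) * Real.log (((d i)^2 / K) / (Real.exp (s i) / R)))
      = (∑ i : I, ((d i)^2 / K) * Real.log ((d i)^2 / K))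
        - (∑ i : I, ((d i)^2 / K) * s i) + Real.log R := by
    simp only [hlog, mul_sub, mul_add, Finset.sum_add_distrib, Finset.sum_sub_distrib,
      ← Finset.sum_mul, hpsum, one_mul]
  rw [hKL]
  -- bound log R
  have hn : (0:ℝ) < Fintype.card I := by positivity
  have hRle : Real.log R ≤ Real.log (Fintype.card I) + T := by
    have h1 : R ≤ (Fintype.card I : ℝ) * Real.exp T := by
      rw [hRdef]
      calc ∑ j : I, Real.exp (s j) ≤ ∑ j : I, Real.exp T := by
            refine Finset.sum_le_sum fun j _ => Real.exp_le_exp.2 ?_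
            calc s j ≤ |s j| := le_abs_self _
              _ ≤ T := Finset.single_le_sum (f := fun j => |s j|)
                    (fun j _ => abs_nonneg _) (Finset.mem_univ j)
        _ = (Fintype.card I : ℝ) * Real.exp T := by
            rw [Finset.sum_const, Finset.card_univ, nsmul_eq_mul]
    calc Real.log R ≤ Real.log ((Fintype.card I : ℝ) * Real.exp T) :=
          Real.log_le_log hR h1
      _ = Real.log (Fintype.card I) + T := by rw [Real.log_mul hn.ne' (Real.exp_pos _).ne', Real.log_exp]
  -- bound ∑ p s
  have hps : -T ≤ ∑ i : I, ((d i)^2 / K) * s i := by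
    have : |∑ i : I, ((d i)^2 / K) * s i| ≤ T := by
      calc |∑ i : I, ((d i)^2 / K) * s i| ≤ ∑ i : I, |((d i)^2 / K) * s i| :=
            Finset.abs_sum_le_sum_abs _ _
        _ ≤ ∑ i : I, |s i| := by
            refine Finset.sum_le_sum fun i _ => ?_
            rw [abs_mul]
            have hple : |(d i)^2 / K| ≤ 1 := by
              rw [abs_of_pos (hp i), div_le_one hK]
              exact Finset.single_le_sum (f := fun j => (d j)^2)
                (fun j _ => sq_nonneg _) (Finset.mem_univ i)
            calc |(d i)^2 / K| * |s i| ≤ 1 * |s i| :=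
                  mul_le_mul_of_nonneg_right hple (abs_nonneg _)
              _ = |s i| := one_mul _
    linarith [neg_abs_le (∑ i : I, ((d i)^2 / K) * s i)]
  -- lower bound for the loss
  have hloss : (∑ i : I, ((d i)^2 / Real.exp (s i) + β * s i + γ * (s i)^2))
      ≥ 2*T - (Fintype.card I : ℝ) * ((|β|+2)^2/(4*γ)) := by
    have : ∀ i : I, (d i)^2 / Real.exp (s i) + β * s i + γ * (s i)^2
        ≥ 2*|s i| - (|β|+2)^2/(4*γ) := by
      intro i
      have h0 : 0 ≤ (d i)^2 / Real.exp (s i) := by positivity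
      linarith [quad_key β γ (s i) hγ]
    calc (∑ i : I, ((d i)^2 / Real.exp (s i) + β * s i + γ * (s i)^2))
        ≥ ∑ i : I, (2*|s i| - (|β|+2)^2/(4*γ)) := Finset.sum_le_sum fun i _ => this i
      _ = 2*T - (Fintype.card I : ℝ) * ((|β|+2)^2/(4*γ)) := by
          rw [Finset.sum_sub_distrib, ← Finset.mul_sum, Finset.sum_const,
            Finset.card_univ, nsmul_eq_mul]
  linarith

/-- Theorem 1 of the paper (all weights equal to 1): the uncertainty-estimator loss
is bounded below by the sum over users of the KL-divergences plus a constant. -/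
theorem stmt_0 {U I : Type*} [Fintype U] [Fintype I] [Nonempty U] [Nonempty I]
    (Δ : U → I → ℝ) (hΔ : ∀ u i, Δ u i ≠ 0) (β γ : ℝ) (hγ : 0 < γ) :
    ∃ c : ℝ, ∀ s : U → I → ℝ,
      (∑ u : U, ∑ i : I,
          ((Δ u i) ^ 2 / Real.exp (s u i) + β * s u i + γ * (s u i) ^ 2)) ≥
        (∑ u : U, ∑ i : I,
            ((Δ u i) ^ 2 / (∑ j : I, (Δ u j) ^ 2)) *
              Real.log (((Δ u i) ^ 2 / (∑ j : I, (Δ u j) ^ 2)) /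
                (Real.exp (s u i) / (∑ j : I, Real.exp (s u j))))) + c := by
  refine ⟨∑ u : U, (-(∑ i : I, ((Δ u i)^2 / (∑ j : I, (Δ u j)^2)) *
          Real.log ((Δ u i)^2 / (∑ j : I, (Δ u j)^2)))
       - (Real.log (Fintype.card I) + (Fintype.card I) * ((|β|+2)^2/(4*γ)))), ?_⟩
  intro s
  rw [← Finset.sum_add_distrib]
  exact Finset.sum_le_sum fun u _ => per_u (Δ u) (hΔ u) β γ hγ (s u)
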